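/- For 0 < p < 1 and integer k ≥ 1, the function ν_SM(k,p) = ((2-p)/(1-p)) · (k-1)! · ∏_{i=1}^{k} (i + (2-p)/(1-p))^{-1} defines a probability mass function on the positive integers, i.e., ∑_{k=1}^∞ ν_SM(k,p) = 1. -/

import Mathlib

open Finset

/-- The limiting degree distribution of the Superstar Model:
`ν_SM(k,p) = ((2-p)/(1-p)) · (k-1)! · ∏_{i=1}^k (i + (2-p)/(1-p))⁻¹` for `k ≥ 1`. -/
noncomputable def nuSM (p : ℝ) (k : ℕ) : ℝ :=
  (2 - p) / (1 - p) * (Nat.factorial (k - 1)) *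
    ∏ i ∈ Finset.Icc 1 k, ((i : ℝ) + (2 - p) / (1 - p))⁻¹

/-- `ν_SM(·,p)` is a probability mass function on the positive integers:
`∑_{k=1}^∞ ν_SM(k,p) = 1`. -/
theorem nuSM_hasSum_one (p : ℝ) (hp0 : 0 < p) (hp1 : p < 1) :
    HasSum (fun k : ℕ => nuSM p (k + 1)) 1 := by
  have h1p : (0:ℝ) < 1 - p := by linarith
  set c : ℝ := (2 - p) / (1 - p) with hc
  have hc1 : 1 ≤ c := by
    rw [hc, le_div_iff₀ h1p]; linarith
  have hc0 : 0 < c := lt_of_lt_of_le one_pos hc1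
  have hP : ∀ k : ℕ, 0 < ∏ i ∈ Icc 1 k, ((i:ℝ) + c)⁻¹ := by
    intro k
    apply Finset.prod_pos
    intro i hi
    have : (0:ℝ) < i + c := by positivity
    exact inv_pos.mpr this
  set u : ℕ → ℝ := fun k => (Nat.factorial k : ℝ) * ∏ i ∈ Icc 1 k, ((i:ℝ) + c)⁻¹
    with hu
  have hprod : ∀ k : ℕ, ∏ i ∈ Icc 1 (k+1), ((i:ℝ) + c)⁻¹
      = (∏ i ∈ Icc 1 k, ((i:ℝ) + c)⁻¹) * (((k:ℝ)+1) + c)⁻¹ := by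
    intro k
    rw [Finset.prod_Icc_succ_top (by omega)]
    push_cast; ring
  have hkey : ∀ k : ℕ, nuSM p (k+1) = u k - u (k+1) := by
    intro k
    have hne : ((k:ℝ)+1+c) ≠ 0 := by positivity
    have hPne : (∏ i ∈ Icc 1 k, ((i:ℝ) + c)⁻¹) ≠ 0 := ne_of_gt (hP k)
    simp only [nuSM, hu, ← hc]
    rw [hprod k]
    simp only [Nat.add_sub_cancel, Nat.factorial_succ]
    push_cast
    field_simp
    ring
  have hu0 : u 0 = 1 := by simp [hu]
  have hsum : ∀ n : ℕ, ∑ k ∈ range n, nuSM p (k+1) = 1 - u n := by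
    intro n
    simp only [hkey]
    rw [Finset.sum_range_sub' u, hu0]
  have hupos : ∀ n : ℕ, 0 ≤ u n := by
    intro n
    exact le_of_lt (mul_pos (by positivity) (hP n))
  have hub : ∀ n : ℕ, u n ≤ ((n:ℝ)+1)⁻¹ := by
    intro n
    induction n with
    | zero => simp [hu0]
    | succ n ih =>
      have hne : ((n:ℝ)+1+c) ≠ 0 := by positivity
      have hrec : u (n+1) = u n * (((n:ℝ)+1) * (((n:ℝ)+1) + c)⁻¹) := by
        simp only [hu, Nat.factorial_succ]
        rw [hprod n]
        push_cast
        ring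
      rw [hrec]
      have h1 : u n * (((n:ℝ)+1) * (((n:ℝ)+1) + c)⁻¹)
          ≤ ((n:ℝ)+1)⁻¹ * (((n:ℝ)+1) * (((n:ℝ)+1) + c)⁻¹) := by
        apply mul_le_mul_of_nonneg_right ih
        positivity
      refine h1.trans ?_
      have h2 : ((n:ℝ)+1)⁻¹ * (((n:ℝ)+1) * (((n:ℝ)+1) + c)⁻¹)
          = (((n:ℝ)+1) + c)⁻¹ := by
        field_simp
      rw [h2]
      apply inv_anti₀ (by positivity)
      push_cast
      linarith
  have hutend : Filter.Tendsto u Filter.atTop (nhds 0) := by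
    apply squeeze_zero hupos hub
    have := tendsto_one_div_add_atTop_nhds_zero_nat (𝕜 := ℝ)
    simpa [one_div] using this
  have htend : Filter.Tendsto (fun n => ∑ k ∈ range n, nuSM p (k+1))
      Filter.atTop (nhds 1) := by
    simp only [hsum]
    have : Filter.Tendsto (fun n => 1 - u n) Filter.atTop (nhds (1 - 0)) :=
      Filter.Tendsto.const_sub 1 hutend
    simpa using this
  have hnonneg : ∀ k : ℕ, 0 ≤ nuSM p (k+1) := by
    intro k
    have := hP (k+1)
    simp only [nuSM, ← hc]
    positivity
  exact (hasSum_iff_tendsto_nat_of_nonneg hnonneg 1).mpr htend
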